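/- Let p > 2 and let μ be a probability measure on ℝ² with density m ∈ Lᵖ(ℝ²), and let ℋμ(z) := ∫_{ℝ²} (z − w)/|z − w|² μ(dw). Then for every z ∈ ℝ², all of the following integrals converge absolutely and |ℋμ(z)|² − 2 ∫_{ℝ²} ⟨(z − w)/|z − w|², ℋμ(w)⟩ μ(dw) = ∫∫_{(w,u) ∈ ℝ²×ℝ², w ≠ u} 2(|z−w|²|z−u|² − ⟨z−w, z−u⟩²)/(|z−w|²|z−u|²|w−u|²) μ(dw) μ(du). -/

import Mathlib

open MeasureTheory RealInnerProductSpace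

/-- The planar Coulomb transform of a measure `μ` on `ℝ²`. -/
noncomputable def coulombTransform (μ : Measure (EuclideanSpace ℝ (Fin 2)))
    (z : EuclideanSpace ℝ (Fin 2)) : EuclideanSpace ℝ (Fin 2) :=
  ∫ w, (‖z - w‖ ^ 2)⁻¹ • (z - w) ∂μ

/-- The circumcircle kernel `2/D²(z−w, z−u)`, where `D(ξ,η)` is the diameter of the
circumcircle of the triangle with vertices `0, ξ, η`. -/
noncomputable def circKernel (z w u : EuclideanSpace ℝ (Fin 2)) : ℝ :=
  2 * (‖z - w‖ ^ 2 * ‖z - u‖ ^ 2 - ⟪z - w, z - u⟫ ^ 2)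
    / (‖z - w‖ ^ 2 * ‖z - u‖ ^ 2 * ‖w - u‖ ^ 2)

open Metric
open scoped ENNReal NNReal
set_option maxHeartbeats 1000000

namespace CoulombAux

abbrev E2 : Type := EuclideanSpace ℝ (Fin 2)

noncomputable def ckern (z w : E2) : E2 := (‖z - w‖ ^ 2)⁻¹ • (z - w)

lemma norm_ckern (z w : E2) : ‖ckern z w‖ = ‖z - w‖⁻¹ := by
  rcases eq_or_ne (z - w) 0 with h | h
  · simp [ckern, h]
  · have hn : ‖z - w‖ ≠ 0 := norm_ne_zero_iff.2 h
    rw [ckern, norm_smul, norm_inv, norm_pow, norm_norm, sq, mul_inv, mul_assoc,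
      inv_mul_cancel₀ hn, mul_one]

lemma measurable_ckern (z : E2) : Measurable (fun w : E2 => ckern z w) := by
  unfold ckern; fun_prop

lemma measurable_ckern2 : Measurable (fun q : E2 × E2 => ckern q.1 q.2) := by
  unfold ckern; fun_prop

lemma circ_identity (a b : E2) (ha : a ≠ 0) (hb : b ≠ 0) (hab : a ≠ b) :
    ⟪(‖a‖ ^ 2)⁻¹ • a, (‖b‖ ^ 2)⁻¹ • b⟫ - ⟪(‖a‖ ^ 2)⁻¹ • a, (‖b - a‖ ^ 2)⁻¹ • (b - a)⟫
      - ⟪(‖b‖ ^ 2)⁻¹ • b, (‖a - b‖ ^ 2)⁻¹ • (a - b)⟫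
    = 2 * (‖a‖ ^ 2 * ‖b‖ ^ 2 - ⟪a, b⟫ ^ 2) / (‖a‖ ^ 2 * ‖b‖ ^ 2 * ‖b - a‖ ^ 2) := by
  have hA : (0:ℝ) < ‖a‖ ^ 2 := pow_pos (norm_pos_iff.2 ha) 2
  have hB : (0:ℝ) < ‖b‖ ^ 2 := pow_pos (norm_pos_iff.2 hb) 2
  have hS : (0:ℝ) < ‖b - a‖ ^ 2 :=
    pow_pos (norm_pos_iff.2 (sub_ne_zero.2 (Ne.symm hab))) 2
  have e1 : ‖b - a‖ ^ 2 = ‖b‖ ^ 2 - 2 * ⟪a, b⟫ + ‖a‖ ^ 2 := by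
    rw [norm_sub_sq_real, real_inner_comm]
  have e2 : ‖a - b‖ ^ 2 = ‖b - a‖ ^ 2 := by rw [← neg_sub b a, norm_neg]
  have e3 : ⟪a, b - a⟫ = ⟪a, b⟫ - ‖a‖ ^ 2 := by
    rw [inner_sub_right, real_inner_self_eq_norm_sq]
  have e4 : ⟪b, a - b⟫ = ⟪a, b⟫ - ‖b‖ ^ 2 := by
    rw [inner_sub_right, real_inner_self_eq_norm_sq, real_inner_comm]
  rw [real_inner_smul_left, real_inner_smul_right, real_inner_smul_left, real_inner_smul_right,
    real_inner_smul_left, real_inner_smul_right, e2, e3, e4]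
  set A := ‖a‖ ^ 2 with hA'
  set B := ‖b‖ ^ 2 with hB'
  set P := (⟪a, b⟫ : ℝ) with hP'
  rw [e1] at hS ⊢
  have hSne : B - P * 2 + A ≠ 0 := by linarith
  field_simp
  ring

lemma circ_identity' (z w u : E2) (hw : w ≠ z) (hu : u ≠ z) (hwu : w ≠ u) :
    ⟪ckern z w, ckern z u⟫ - ⟪ckern z w, ckern w u⟫ - ⟪ckern z u, ckern u w⟫
      = circKernel z w u := by
  have h1 : z - u - (z - w) = w - u := by abel
  have h2 : z - w - (z - u) = u - w := by abel
  have ha : z - w ≠ 0 := sub_ne_zero.2 (Ne.symm hw)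
  have hb : z - u ≠ 0 := sub_ne_zero.2 (Ne.symm hu)
  have hab : z - w ≠ z - u := by
    intro h
    apply hwu
    have : z - (z - w) = z - (z - u) := by rw [h]
    simpa [sub_sub_cancel] using this
  have key := circ_identity (z - w) (z - u) ha hb hab
  rw [h1, h2] at key
  simp only [ckern, circKernel]
  exact key

lemma pot_bound (p : ℝ) (hp : 2 < p)
    (μ : Measure E2) (hμprob : IsProbabilityMeasure μ)
    (m : E2 → ℝ) (hm : MemLp m (ENNReal.ofReal p) volume)
    (hdens : μ = volume.withDensity (fun w => ENNReal.ofReal (m w))) :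
    ∃ C : ℝ≥0∞, C ≠ ⊤ ∧ ∀ z : E2, ∫⁻ w, ENNReal.ofReal ‖z - w‖⁻¹ ∂μ ≤ C := by
  have hp1 : 1 < p := by linarith
  have hp0 : (0:ℝ) < p := by linarith
  set q : ℝ := p / (p - 1) with hq
  have hpq : p.HolderConjugate q := Real.HolderConjugate.conjExponent hp1
  have hq0 : 0 < q := hpq.symm.pos
  have hq2 : q < 2 := by
    rw [hq, div_lt_iff₀ (by linarith : (0:ℝ) < p - 1)]; linarith
  set α : ℝ := 2 / q with hα'
  have hα1 : 1 < α := (one_lt_div hq0).2 hq2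
  have hα0 : 0 ≤ α := by linarith
  set M : ℝ≥0∞ := eLpNorm m (ENNReal.ofReal p) volume with hM'
  have hMne : M ≠ ⊤ := hm.2.ne
  set V : ℝ≥0∞ := volume (ball (0:E2) 1) with hV'
  have hVne : V ^ (1/q) ≠ ⊤ :=
    ENNReal.rpow_ne_top_of_nonneg (by positivity) measure_ball_lt_top.ne
  -- Lp bound for density
  have hLp : (∫⁻ w, (ENNReal.ofReal (m w)) ^ p ∂volume) ^ (1/p) ≤ M := by
    rw [hM', eLpNorm_eq_lintegral_rpow_enorm_toReal (by simpa using hp0)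
      (by simp), ENNReal.toReal_ofReal hp0.le]
    refine ENNReal.rpow_le_rpow (lintegral_mono fun w => ?_) (by positivity)
    exact ENNReal.rpow_le_rpow (Real.ofReal_le_enorm _) hp0.le
  -- ball measure bound
  have hball : ∀ (z : E2) (r : ℝ), 0 ≤ r →
      μ (ball z r) ≤ M * V ^ (1/q) * (ENNReal.ofReal r) ^ α := by
    intro z r hr
    have hmb : μ (ball z r) = ∫⁻ w in ball z r, ENNReal.ofReal (m w) ∂volume := by
      rw [hdens, withDensity_apply _ measurableSet_ball]
    have hmeas : AEMeasurable (fun w => ENNReal.ofReal (m w))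
        (volume.restrict (ball z r)) :=
      (ENNReal.measurable_ofReal.comp_aemeasurable
        hm.1.aemeasurable.restrict)
    have hold := ENNReal.lintegral_mul_le_Lp_mul_Lq (volume.restrict (ball z r)) hpq
      hmeas aemeasurable_const (g := fun _ => (1:ℝ≥0∞))
    simp only [Pi.mul_apply, mul_one, ENNReal.one_rpow, lintegral_const,
      Measure.restrict_apply MeasurableSet.univ, Set.univ_inter, one_mul] at hold
    have h1 : (∫⁻ w in ball z r, (ENNReal.ofReal (m w)) ^ p ∂volume) ^ (1/p) ≤ M :=
      le_trans (ENNReal.rpow_le_rpow (setLIntegral_le_lintegral _ _) (by positivity)) hLp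
    have hvol : volume (ball z r) = (ENNReal.ofReal r) ^ (2:ℕ) * V := by
      rw [Measure.addHaar_ball _ _ hr, ← ENNReal.ofReal_pow hr, finrank_euclideanSpace]
      norm_num [hV']
    calc μ (ball z r) = ∫⁻ w in ball z r, ENNReal.ofReal (m w) ∂volume := hmb
      _ ≤ (∫⁻ w in ball z r, (ENNReal.ofReal (m w)) ^ p ∂volume) ^ (1/p)
          * (volume (ball z r)) ^ (1/q) := hold
      _ ≤ M * ((ENNReal.ofReal r) ^ (2:ℕ) * V) ^ (1/q) := by
          rw [← hvol]
          exact mul_le_mul_left h1 _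
      _ = M * V ^ (1/q) * (ENNReal.ofReal r) ^ α := by
          rw [ENNReal.mul_rpow_of_nonneg _ _ (by positivity), ← ENNReal.rpow_natCast,
            ← ENNReal.rpow_mul]
          have : (2:ℕ) * (1/q) = α := by push_cast; rw [hα']; ring
          rw [this]; ring

  set Cb : ℝ≥0∞ := M * V ^ (1/q) with hCb'
  set r : ℝ := (2:ℝ) ^ (1 - α) with hr'
  have hrpos : 0 < r := Real.rpow_pos_of_pos two_pos _
  have hr1 : r < 1 := Real.rpow_lt_one_of_one_lt_of_neg one_lt_two (by linarith)
  have hrE : ENNReal.ofReal r < 1 := by rwa [ENNReal.ofReal_lt_one]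
  set S : ℝ≥0∞ := ENNReal.ofReal 2 * (1 - ENNReal.ofReal r)⁻¹ with hS'
  have hSne : S ≠ ⊤ := ENNReal.mul_ne_top ENNReal.ofReal_ne_top
    (ENNReal.inv_ne_top.2 (tsub_pos_of_lt hrE).ne')
  refine ⟨Cb * S + 1, ?_, ?_⟩
  · exact ENNReal.add_ne_top.2 ⟨ENNReal.mul_ne_top
      (ENNReal.mul_ne_top hMne hVne) hSne, ENNReal.one_ne_top⟩
  intro z
  have hμz : μ ({z} : Set E2) = 0 := by
    have hac : μ ≪ volume := by rw [hdens]; exact withDensity_absolutelyContinuous _ _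
    exact hac (measure_singleton z)
  set f : E2 → ℝ≥0∞ := fun w => ENNReal.ofReal ‖z - w‖⁻¹ with hf'
  have hsplit : ∫⁻ w, f w ∂μ
      = (∫⁻ w in ball z 1, f w ∂μ) + ∫⁻ w in (ball z 1)ᶜ, f w ∂μ :=
    (lintegral_add_compl f measurableSet_ball).symm
  have hcompl : ∫⁻ w in (ball z 1)ᶜ, f w ∂μ ≤ 1 := by
    have : ∫⁻ w in (ball z 1)ᶜ, f w ∂μ ≤ ∫⁻ _ in (ball z 1)ᶜ, 1 ∂μ := by
      refine setLIntegral_mono measurable_const fun w hw => ?_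
      have h1 : (1:ℝ) ≤ dist w z := not_lt.1 (fun h => hw (mem_ball.2 h))
      have h2 : ‖z - w‖ = dist w z := by rw [dist_comm, dist_eq_norm]
      show ENNReal.ofReal ‖z - w‖⁻¹ ≤ 1
      rw [h2]
      calc ENNReal.ofReal (dist w z)⁻¹ ≤ ENNReal.ofReal 1 :=
            ENNReal.ofReal_le_ofReal (inv_le_one_of_one_le₀ h1)
        _ = 1 := ENNReal.ofReal_one
    refine le_trans this ?_
    rw [setLIntegral_one]
    exact prob_le_one
  have hshell : ∀ k : ℕ,
      ∫⁻ w in ball z ((1/2:ℝ)^k) \ ball z ((1/2:ℝ)^(k+1)), f w ∂μ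
        ≤ Cb * ENNReal.ofReal (2 * r ^ k) := by
    intro k
    have key : (2:ℝ)^(k+1) * (((1/2:ℝ))^k)^α = 2 * r^k := by
      have h1 : ((1/2:ℝ))^k = ((2:ℝ)^k)⁻¹ := by rw [one_div, inv_pow]
      have h2 : (((2:ℝ)^k)⁻¹ : ℝ) ^ α = (((2:ℝ)^k : ℝ) ^ α)⁻¹ :=
        Real.inv_rpow (by positivity) α
      have h3 : ((2:ℝ)^k : ℝ) ^ α = (2:ℝ) ^ ((k:ℝ) * α) := by
        rw [← Real.rpow_natCast 2 k, ← Real.rpow_mul (by norm_num)]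
      have h4 : r ^ k = (2:ℝ) ^ ((1 - α) * (k:ℝ)) := by
        rw [hr', ← Real.rpow_natCast ((2:ℝ) ^ (1-α)) k, ← Real.rpow_mul (by norm_num)]
      rw [h1, h2, h3, h4, ← Real.rpow_neg (by norm_num : (0:ℝ) ≤ 2), pow_succ,
        ← Real.rpow_natCast 2 k, mul_comm ((2:ℝ) ^ ((k:ℕ):ℝ)) 2, mul_assoc,
        ← Real.rpow_add two_pos]
      congr 1
      ring
    have hub : ∀ w ∈ ball z ((1/2:ℝ)^k) \ ball z ((1/2:ℝ)^(k+1)),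
        f w ≤ ENNReal.ofReal ((2:ℝ)^(k+1)) := by
      intro w hw
      have h2 : ((1/2:ℝ))^(k+1) ≤ dist w z := not_lt.1 (fun h => hw.2 (mem_ball.2 h))
      have hpos : (0:ℝ) < (1/2:ℝ)^(k+1) := by positivity
      have h3 : ‖z - w‖ = dist w z := by rw [dist_comm, dist_eq_norm]
      show ENNReal.ofReal ‖z - w‖⁻¹ ≤ ENNReal.ofReal ((2:ℝ)^(k+1))
      rw [h3]
      refine ENNReal.ofReal_le_ofReal ?_
      calc (dist w z)⁻¹ ≤ ((1/2:ℝ)^(k+1))⁻¹ := inv_anti₀ hpos h2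
        _ = (2:ℝ)^(k+1) := by rw [one_div, inv_pow, inv_inv]
    calc ∫⁻ w in ball z ((1/2:ℝ)^k) \ ball z ((1/2:ℝ)^(k+1)), f w ∂μ
        ≤ ∫⁻ _ in ball z ((1/2:ℝ)^k) \ ball z ((1/2:ℝ)^(k+1)),
            ENNReal.ofReal ((2:ℝ)^(k+1)) ∂μ := setLIntegral_mono measurable_const hub
      _ = ENNReal.ofReal ((2:ℝ)^(k+1))
            * μ (ball z ((1/2:ℝ)^k) \ ball z ((1/2:ℝ)^(k+1))) := setLIntegral_const _ _
      _ ≤ ENNReal.ofReal ((2:ℝ)^(k+1)) * μ (ball z ((1/2:ℝ)^k)) :=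
          mul_le_mul_right (measure_mono Set.diff_subset) _
      _ ≤ ENNReal.ofReal ((2:ℝ)^(k+1)) * (Cb * (ENNReal.ofReal ((1/2:ℝ)^k)) ^ α) :=
          mul_le_mul_right (hball z _ (by positivity)) _
      _ = Cb * ENNReal.ofReal (2 * r ^ k) := by
          rw [ENNReal.ofReal_rpow_of_nonneg (by positivity) hα0, ← mul_assoc,
            mul_comm (ENNReal.ofReal ((2:ℝ)^(k+1))) Cb, mul_assoc,
            ← ENNReal.ofReal_mul (by positivity), key]
  have hcover : ball z 1 \ {z} ⊆
      ⋃ k : ℕ, (ball z ((1/2:ℝ)^k) \ ball z ((1/2:ℝ)^(k+1))) := by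
    rintro w ⟨hw1, hw2⟩
    have hd0 : 0 < dist w z := dist_pos.2 (by simpa using hw2)
    have hd1 : dist w z < 1 := mem_ball.1 hw1
    obtain ⟨n, hn⟩ := exists_pow_lt_of_lt_one hd0 (by norm_num : (1/2:ℝ) < 1)
    have hex : ∃ n, (1/2:ℝ)^(n+1) ≤ dist w z :=
      ⟨n, le_of_lt (lt_of_le_of_lt
        (pow_le_pow_of_le_one (by norm_num) (by norm_num) (Nat.le_succ n)) hn)⟩
    have hk1 : (1/2:ℝ)^(Nat.find hex + 1) ≤ dist w z := Nat.find_spec hex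
    have hk2 : dist w z < (1/2:ℝ)^(Nat.find hex) := by
      rcases Nat.eq_zero_or_pos (Nat.find hex) with h0 | hpos
      · rw [h0]; simpa using hd1
      · obtain ⟨j, hj⟩ := Nat.exists_eq_succ_of_ne_zero hpos.ne'
        rw [hj]
        exact not_le.1 (by simpa [hj] using Nat.find_min hex (hj ▸ Nat.lt_succ_self j))
    exact Set.mem_iUnion.2 ⟨Nat.find hex,
      ⟨mem_ball.2 hk2, fun h => absurd (mem_ball.1 h) (not_lt.2 hk1)⟩⟩
  have hb : ∫⁻ w in ball z 1, f w ∂μ ≤ Cb * S := by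
    calc ∫⁻ w in ball z 1, f w ∂μ
        ≤ ∫⁻ w in (ball z 1 \ {z}) ∪ {z}, f w ∂μ :=
          lintegral_mono_set (Set.subset_diff_union _ _)
      _ ≤ (∫⁻ w in ball z 1 \ {z}, f w ∂μ) + ∫⁻ w in {z}, f w ∂μ :=
          lintegral_union_le _ _ _
      _ = ∫⁻ w in ball z 1 \ {z}, f w ∂μ := by
          rw [setLIntegral_measure_zero _ _ hμz, add_zero]
      _ ≤ ∫⁻ w in ⋃ k : ℕ, (ball z ((1/2:ℝ)^k) \ ball z ((1/2:ℝ)^(k+1))), f w ∂μ :=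
          lintegral_mono_set hcover
      _ ≤ ∑' k : ℕ, ∫⁻ w in ball z ((1/2:ℝ)^k) \ ball z ((1/2:ℝ)^(k+1)), f w ∂μ :=
          lintegral_iUnion_le _ _
      _ ≤ ∑' k : ℕ, Cb * ENNReal.ofReal (2 * r ^ k) := ENNReal.tsum_le_tsum hshell
      _ = Cb * ∑' k : ℕ, ENNReal.ofReal (2 * r ^ k) := ENNReal.tsum_mul_left
      _ = Cb * S := by
          congr 1
          have he : ∀ k : ℕ, ENNReal.ofReal (2 * r ^ k)
              = ENNReal.ofReal 2 * (ENNReal.ofReal r) ^ k := fun k => by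
            rw [ENNReal.ofReal_mul (by norm_num), ENNReal.ofReal_pow hrpos.le]
          simp_rw [he]
          rw [ENNReal.tsum_mul_left, ENNReal.tsum_geometric, hS']
  calc ∫⁻ w, f w ∂μ = _ := hsplit
    _ ≤ Cb * S + 1 := add_le_add hb hcompl


section

set_option linter.unusedSectionVars false
variable {μ : Measure E2} [IsFiniteMeasure μ] {C : ℝ≥0∞}

lemma integrable_invnorm (hC : C ≠ ⊤)
    (hbnd : ∀ z : E2, ∫⁻ w, ENNReal.ofReal ‖z - w‖⁻¹ ∂μ ≤ C) (z : E2) :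
    Integrable (fun w => ‖z - w‖⁻¹) μ := by
  refine ⟨(by fun_prop : Measurable fun w : E2 => ‖z - w‖⁻¹).aestronglyMeasurable, ?_⟩
  rw [hasFiniteIntegral_iff_norm]
  have : ∀ w : E2, ENNReal.ofReal ‖‖z - w‖⁻¹‖ = ENNReal.ofReal ‖z - w‖⁻¹ := fun w => by
    rw [Real.norm_eq_abs, abs_of_nonneg (by positivity)]
  simp_rw [this]
  exact lt_of_le_of_lt (hbnd z) hC.lt_top

lemma integrable_ckern (hC : C ≠ ⊤)
    (hbnd : ∀ z : E2, ∫⁻ w, ENNReal.ofReal ‖z - w‖⁻¹ ∂μ ≤ C) (z : E2) :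
    Integrable (fun w => ckern z w) μ := by
  refine ⟨(measurable_ckern z).aestronglyMeasurable, ?_⟩
  rw [hasFiniteIntegral_iff_norm]
  simp_rw [norm_ckern]
  exact lt_of_le_of_lt (hbnd z) hC.lt_top

lemma ct_eq (y : E2) : coulombTransform μ y = ∫ w, ckern y w ∂μ := rfl

lemma stronglyMeasurable_coulombT : StronglyMeasurable (coulombTransform μ) :=
  measurable_ckern2.stronglyMeasurable.integral_prod_right'

lemma integral_invnorm_le (hC : C ≠ ⊤)
    (hbnd : ∀ z : E2, ∫⁻ w, ENNReal.ofReal ‖z - w‖⁻¹ ∂μ ≤ C) (z : E2) :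
    ∫ w, ‖z - w‖⁻¹ ∂μ ≤ C.toReal := by
  rw [integral_eq_lintegral_of_nonneg_ae (ae_of_all _ fun w => by positivity)
    (by fun_prop : Measurable fun w : E2 => ‖z - w‖⁻¹).aestronglyMeasurable]
  exact ENNReal.toReal_mono hC (hbnd z)

lemma norm_coulombT_le (hC : C ≠ ⊤)
    (hbnd : ∀ z : E2, ∫⁻ w, ENNReal.ofReal ‖z - w‖⁻¹ ∂μ ≤ C) (z : E2) :
    ‖coulombTransform μ z‖ ≤ C.toReal := by
  rw [ct_eq]
  refine le_trans (norm_integral_le_integral_norm _) ?_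
  calc ∫ w, ‖ckern z w‖ ∂μ = ∫ w, ‖z - w‖⁻¹ ∂μ := by simp_rw [norm_ckern]
    _ ≤ C.toReal := integral_invnorm_le hC hbnd z

lemma integrable_inner_coulomb (hC : C ≠ ⊤)
    (hbnd : ∀ z : E2, ∫⁻ w, ENNReal.ofReal ‖z - w‖⁻¹ ∂μ ≤ C) (z : E2) :
    Integrable (fun w => ⟪ckern z w, coulombTransform μ w⟫) μ := by
  refine Integrable.mono' ((integrable_invnorm hC hbnd z).mul_const C.toReal)
    ((measurable_ckern z).stronglyMeasurable.inner
      stronglyMeasurable_coulombT).aestronglyMeasurable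
    (ae_of_all _ fun w => ?_)
  calc ‖(⟪ckern z w, coulombTransform μ w⟫ : ℝ)‖
      ≤ ‖ckern z w‖ * ‖coulombTransform μ w‖ := norm_inner_le_norm _ _
    _ ≤ ‖z - w‖⁻¹ * C.toReal := by
        rw [norm_ckern]
        exact mul_le_mul_of_nonneg_left (norm_coulombT_le hC hbnd w) (by positivity)

lemma integrable_f1 (hC : C ≠ ⊤)
    (hbnd : ∀ z : E2, ∫⁻ w, ENNReal.ofReal ‖z - w‖⁻¹ ∂μ ≤ C) (z : E2) :
    Integrable (fun q : E2 × E2 => (⟪ckern z q.1, ckern z q.2⟫ : ℝ)) (μ.prod μ) := by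
  have hmeas : AEStronglyMeasurable
      (fun q : E2 × E2 => (⟪ckern z q.1, ckern z q.2⟫ : ℝ)) (μ.prod μ) :=
    (((measurable_ckern z).comp measurable_fst).stronglyMeasurable.inner
      ((measurable_ckern z).comp measurable_snd).stronglyMeasurable).aestronglyMeasurable
  refine Integrable.mono'
    ((integrable_invnorm hC hbnd z).mul_prod (integrable_invnorm hC hbnd z))
    hmeas (ae_of_all _ fun q => ?_)
  calc ‖(⟪ckern z q.1, ckern z q.2⟫ : ℝ)‖
      ≤ ‖ckern z q.1‖ * ‖ckern z q.2‖ := norm_inner_le_norm _ _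
    _ = ‖z - q.1‖⁻¹ * ‖z - q.2‖⁻¹ := by rw [norm_ckern, norm_ckern]

lemma integrable_f2 (hC : C ≠ ⊤)
    (hbnd : ∀ z : E2, ∫⁻ w, ENNReal.ofReal ‖z - w‖⁻¹ ∂μ ≤ C) (z : E2) :
    Integrable (fun q : E2 × E2 => (⟪ckern z q.1, ckern q.1 q.2⟫ : ℝ)) (μ.prod μ) := by
  have hmeasSM : StronglyMeasurable
      (fun q : E2 × E2 => (⟪ckern z q.1, ckern q.1 q.2⟫ : ℝ)) :=
    ((measurable_ckern z).comp measurable_fst).stronglyMeasurable.inner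
      measurable_ckern2.stronglyMeasurable
  refine (integrable_prod_iff hmeasSM.aestronglyMeasurable).2 ⟨?_, ?_⟩
  · refine ae_of_all _ fun w => ?_
    have hsm : AEStronglyMeasurable (fun u : E2 => (⟪ckern z w, ckern w u⟫ : ℝ)) μ :=
      (stronglyMeasurable_const.inner (measurable_ckern w).stronglyMeasurable).aestronglyMeasurable
    refine Integrable.mono' ((integrable_invnorm hC hbnd w).const_mul (‖z - w‖⁻¹))
      hsm (ae_of_all _ fun u => ?_)
    calc ‖(⟪ckern z w, ckern w u⟫ : ℝ)‖
        ≤ ‖ckern z w‖ * ‖ckern w u‖ := norm_inner_le_norm _ _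
      _ = ‖z - w‖⁻¹ * ‖w - u‖⁻¹ := by rw [norm_ckern, norm_ckern]
  · refine Integrable.mono' ((integrable_invnorm hC hbnd z).mul_const C.toReal)
      (hmeasSM.aestronglyMeasurable.norm.integral_prod_right')
      (ae_of_all _ fun w => ?_)
    have h0 : 0 ≤ ∫ u, ‖(⟪ckern z w, ckern w u⟫ : ℝ)‖ ∂μ :=
      integral_nonneg fun u => norm_nonneg _
    rw [Real.norm_eq_abs, abs_of_nonneg h0]
    calc ∫ u, ‖(⟪ckern z w, ckern w u⟫ : ℝ)‖ ∂μ
        ≤ ∫ u, ‖z - w‖⁻¹ * ‖w - u‖⁻¹ ∂μ := by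
          refine integral_mono_of_nonneg (ae_of_all _ fun u => norm_nonneg _)
            ((integrable_invnorm hC hbnd w).const_mul _) (ae_of_all _ fun u => ?_)
          calc ‖(⟪ckern z w, ckern w u⟫ : ℝ)‖
              ≤ ‖ckern z w‖ * ‖ckern w u‖ := norm_inner_le_norm _ _
            _ = ‖z - w‖⁻¹ * ‖w - u‖⁻¹ := by rw [norm_ckern, norm_ckern]
      _ = ‖z - w‖⁻¹ * ∫ u, ‖w - u‖⁻¹ ∂μ := by
          simp_rw [← smul_eq_mul]
          rw [integral_smul]
      _ ≤ ‖z - w‖⁻¹ * C.toReal :=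
          mul_le_mul_of_nonneg_left (integral_invnorm_le hC hbnd w) (by positivity)

lemma integrable_f3 (hC : C ≠ ⊤)
    (hbnd : ∀ z : E2, ∫⁻ w, ENNReal.ofReal ‖z - w‖⁻¹ ∂μ ≤ C) (z : E2) :
    Integrable (fun q : E2 × E2 => (⟪ckern z q.2, ckern q.2 q.1⟫ : ℝ)) (μ.prod μ) :=
  (integrable_f2 hC hbnd z).swap

end

end CoulombAux

open CoulombAux

/-- The integrated circumcircle identity of Lemma `circumcircle`:
`|ℋμ(z)|² − 2 ℋ[μℋμ](z) = ∬_{w≠u} 2/D²(z−w,z−u) μ(dw)μ(du)`. -/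
theorem coulomb_transform_circumcircle_identity (p : ℝ) (hp : 2 < p)
    (μ : Measure (EuclideanSpace ℝ (Fin 2))) (hμprob : IsProbabilityMeasure μ)
    (m : EuclideanSpace ℝ (Fin 2) → ℝ)
    (hm : MemLp m (ENNReal.ofReal p) (volume : Measure (EuclideanSpace ℝ (Fin 2))))
    (hdens : μ = (volume : Measure (EuclideanSpace ℝ (Fin 2))).withDensity
      (fun w => ENNReal.ofReal (m w))) :
    ∀ z : EuclideanSpace ℝ (Fin 2),
      Integrable (fun w => (‖z - w‖ ^ 2)⁻¹ • (z - w)) μ ∧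
      Integrable (fun w => ⟪(‖z - w‖ ^ 2)⁻¹ • (z - w), coulombTransform μ w⟫) μ ∧
      IntegrableOn
        (fun q : EuclideanSpace ℝ (Fin 2) × EuclideanSpace ℝ (Fin 2) =>
          circKernel z q.1 q.2)
        {q | q.1 ≠ q.2} (μ.prod μ) ∧
      ‖coulombTransform μ z‖ ^ 2
          - 2 * ∫ w, ⟪(‖z - w‖ ^ 2)⁻¹ • (z - w), coulombTransform μ w⟫ ∂μ
        = ∫ q in {q : EuclideanSpace ℝ (Fin 2) × EuclideanSpace ℝ (Fin 2) | q.1 ≠ q.2},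
            circKernel z q.1 q.2 ∂(μ.prod μ) := by
  obtain ⟨C, hC, hbnd⟩ := pot_bound p hp μ hμprob m hm hdens
  have hμz : ∀ y : E2, μ {y} = 0 := fun y => by
    rw [hdens]; exact (withDensity_absolutelyContinuous _ _) (measure_singleton y)
  intro z
  have hK : ∀ y : E2, Integrable (fun w => ckern y w) μ := integrable_ckern hC hbnd
  have hf1 := integrable_f1 hC hbnd z
  have hf2 := integrable_f2 hC hbnd z
  have hf3 := integrable_f3 hC hbnd z
  set F : E2 × E2 → ℝ := fun q =>
    ⟪ckern z q.1, ckern z q.2⟫ - ⟪ckern z q.1, ckern q.1 q.2⟫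
      - ⟪ckern z q.2, ckern q.2 q.1⟫ with hF'
  have hFint : Integrable F (μ.prod μ) := (hf1.sub hf2).sub hf3
  set D : Set (E2 × E2) := {q | q.1 ≠ q.2} with hD'
  have hdiagmeas : MeasurableSet {q : E2 × E2 | q.1 = q.2} :=
    (isClosed_eq continuous_fst continuous_snd).measurableSet
  have hDcnull : (μ.prod μ) Dᶜ = 0 := by
    have hc : Dᶜ = {q : E2 × E2 | q.1 = q.2} := by ext q; simp [hD']
    rw [hc, Measure.prod_apply hdiagmeas]
    have he : ∀ w : E2, Prod.mk w ⁻¹' {q : E2 × E2 | q.1 = q.2} = ({w} : Set E2) := by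
      intro w; ext u; simp [eq_comm]
    simp_rw [he, hμz]
    exact lintegral_zero
  have haeD : ∀ᵐ q ∂(μ.prod μ), q ∈ D := by
    rw [ae_iff]
    convert hDcnull using 2
    rfl
  have hae1 : ∀ᵐ q : E2 × E2 ∂(μ.prod μ), q.1 ≠ z := by
    rw [ae_iff]
    have he : {q : E2 × E2 | ¬q.1 ≠ z} = ({z} : Set E2) ×ˢ (Set.univ : Set E2) := by
      ext q
      simp only [Set.mem_setOf_eq, not_not, Set.mem_prod, Set.mem_singleton_iff,
        Set.mem_univ, and_true]
    rw [he, Measure.prod_prod]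
    simp [hμz z]
  have hae2 : ∀ᵐ q : E2 × E2 ∂(μ.prod μ), q.2 ≠ z := by
    rw [ae_iff]
    have he : {q : E2 × E2 | ¬q.2 ≠ z} = (Set.univ : Set E2) ×ˢ ({z} : Set E2) := by
      ext q
      simp only [Set.mem_setOf_eq, not_not, Set.mem_prod, Set.mem_singleton_iff,
        Set.mem_univ, true_and]
    rw [he, Measure.prod_prod]
    simp [hμz z]
  have haeEq : F =ᵐ[μ.prod μ] fun q => circKernel z q.1 q.2 := by
    filter_upwards [haeD, hae1, hae2] with q hqD hq1 hq2
    exact circ_identity' z q.1 q.2 hq1 hq2 hqD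
  have hcirc_int : Integrable (fun q : E2 × E2 => circKernel z q.1 q.2) (μ.prod μ) :=
    hFint.congr haeEq
  have hres : (μ.prod μ).restrict D = μ.prod μ :=
    Measure.restrict_eq_self_of_ae_mem haeD
  refine ⟨hK z, integrable_inner_coulomb hC hbnd z, ?_, ?_⟩
  · exact hcirc_int.integrableOn
  · have hRHS : ∫ q in D, circKernel z q.1 q.2 ∂(μ.prod μ)
        = ∫ q, F q ∂(μ.prod μ) := by
      calc ∫ q in D, circKernel z q.1 q.2 ∂(μ.prod μ)
          = ∫ q, circKernel z q.1 q.2 ∂(μ.prod μ) := by rw [hres]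
        _ = ∫ q, F q ∂(μ.prod μ) := integral_congr_ae haeEq.symm
    have hB : ∫ q : E2 × E2, (⟪ckern z q.1, ckern z q.2⟫ : ℝ) ∂(μ.prod μ)
        = ‖coulombTransform μ z‖ ^ 2 := by
      rw [integral_prod _ hf1]
      have h1 : ∀ w : E2, ∫ u, (⟪ckern z w, ckern z u⟫ : ℝ) ∂μ
          = ⟪ckern z w, coulombTransform μ z⟫ := fun w => by
        rw [ct_eq]; exact integral_inner (hK z) _
      simp_rw [h1]
      have h2 : ∀ w : E2, (⟪ckern z w, coulombTransform μ z⟫ : ℝ)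
          = ⟪coulombTransform μ z, ckern z w⟫ := fun w => real_inner_comm _ _
      simp_rw [h2]
      rw [show (∫ w, (⟪coulombTransform μ z, ckern z w⟫ : ℝ) ∂μ)
          = ⟪coulombTransform μ z, ∫ w, ckern z w ∂μ⟫ from integral_inner (hK z) _,
        ← ct_eq, real_inner_self_eq_norm_sq]
    have hC2 : ∫ q : E2 × E2, (⟪ckern z q.1, ckern q.1 q.2⟫ : ℝ) ∂(μ.prod μ)
        = ∫ w, ⟪ckern z w, coulombTransform μ w⟫ ∂μ := by
      rw [integral_prod _ hf2]
      refine integral_congr_ae (ae_of_all _ fun w => ?_)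
      show ∫ u, (⟪ckern z w, ckern w u⟫ : ℝ) ∂μ = ⟪ckern z w, coulombTransform μ w⟫
      rw [ct_eq]; exact integral_inner (hK w) _
    have hD2 : ∫ q : E2 × E2, (⟪ckern z q.2, ckern q.2 q.1⟫ : ℝ) ∂(μ.prod μ)
        = ∫ q : E2 × E2, (⟪ckern z q.1, ckern q.1 q.2⟫ : ℝ) ∂(μ.prod μ) :=
      integral_prod_swap (fun q : E2 × E2 => (⟪ckern z q.1, ckern q.1 q.2⟫ : ℝ))
    have hsplit : ∫ q, F q ∂(μ.prod μ)
        = (∫ q : E2 × E2, (⟪ckern z q.1, ckern z q.2⟫ : ℝ) ∂(μ.prod μ))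
          - (∫ q : E2 × E2, (⟪ckern z q.1, ckern q.1 q.2⟫ : ℝ) ∂(μ.prod μ))
          - ∫ q : E2 × E2, (⟪ckern z q.2, ckern q.2 q.1⟫ : ℝ) ∂(μ.prod μ) := by
      have e1 := integral_sub (hf1.sub hf2) hf3
      have e2 := integral_sub hf1 hf2
      simp only [Pi.sub_apply] at e1
      exact e1.trans (by rw [e2])
    have hgoal : ‖coulombTransform μ z‖ ^ 2
        - 2 * ∫ w, ⟪ckern z w, coulombTransform μ w⟫ ∂μ
        = ∫ q in D, circKernel z q.1 q.2 ∂(μ.prod μ) := by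
      rw [hRHS, hsplit, hB, hC2, hD2, hC2]; ring
    exact hgoal
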